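/- Let A ⊂ ℝᵖ be a compact self-similar fractal with M ≥ 2 similitudes of equal contraction ratio r, d = log M / log(1/r), s > d, diam(A) = 1. Then for every k ≥ 0, ℰ_s(A, M^{k+1} + M^k) ≥ M^{s/d} (M^k)^{1+s/d}. -/

import Mathlib

open Filter MeasureTheory Metric Real
open scoped BigOperators ENNReal NNReal Topology

open Classical in
noncomputable def rieszEnergy {E : Type*} [PseudoMetricSpace E] (s : ℝ) (ω : Finset E) : ℝ :=
  ∑ x ∈ ω, ∑ y ∈ ω, if x ≠ y then dist x y ^ (-s) else 0

noncomputable def minRieszEnergy {E : Type*} [PseudoMetricSpace E] (s : ℝ) (A : Set E) (N : ℕ) : ℝ :=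
  sInf {e : ℝ | ∃ ω : Finset E, ↑ω ⊆ A ∧ ω.card = N ∧ e = rieszEnergy s ω}
/-- pigeonhole lower bound for the minimal energy of M^(k+1)+M^k points. -/
theorem statement12 {p : ℕ} (s d r : ℝ) (M : ℕ) (hM : 2 ≤ M) (hr : 0 < r) (hr1 : r < 1)
    (A : Set (EuclideanSpace ℝ (Fin p))) (hA : IsCompact A)
    (ψ : Fin M → EuclideanSpace ℝ (Fin p) → EuclideanSpace ℝ (Fin p))
    (hψ : ∀ m x y, dist (ψ m x) (ψ m y) = r * dist x y)
    (hfix : A = ⋃ m, ψ m '' A)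
    (hdiam : Metric.diam A = 1)
    (hd : d = Real.log M / Real.log (1 / r)) (hsd : d < s) (k : ℕ) :
    (M : ℝ) ^ (s / d) * ((M : ℝ) ^ k) ^ (1 + s / d) ≤
      minRieszEnergy s A (M ^ (k + 1) + M ^ k) := by
  classical
  have hM0 : 0 < M := by omega
  have hM1 : (1 : ℝ) < M := by exact_mod_cast hM
  have hMpos : (0 : ℝ) < M := by linarith
  have hlogM : 0 < Real.log M := Real.log_pos hM1
  have hinv : 1 < 1 / r := one_lt_one_div hr hr1
  have hloginv : 0 < Real.log (1 / r) := Real.log_pos hinv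
  have hd0 : 0 < d := hd ▸ div_pos hlogM hloginv
  have hs0 : 0 < s := lt_trans hd0 hsd
  -- r as a power of M
  have hrM : r = (M : ℝ) ^ (-(1 / d)) := by
    have h1 : (M : ℝ) ^ (1 / d : ℝ) = 1 / r := by
      rw [Real.rpow_def_of_pos hMpos]
      have h2 : Real.log M * (1 / d) = Real.log (1 / r) := by
        rw [hd]; field_simp
      rw [h2, Real.exp_log (by positivity)]
    rw [Real.rpow_neg hMpos.le, h1, one_div, inv_inv]
  -- the key power identity
  have hkey : ∀ n : ℕ, (r ^ n : ℝ) ^ (-s) = (M : ℝ) ^ ((n : ℝ) * (s / d)) := by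
    intro n
    rw [hrM, ← Real.rpow_natCast ((M : ℝ) ^ (-(1 / d) : ℝ)) n, ← Real.rpow_mul hMpos.le,
      ← Real.rpow_mul hMpos.le]
    congr 1
    field_simp
  -- the coloring by cells of level n
  have hcell : ∀ n : ℕ, ∃ c : EuclideanSpace ℝ (Fin p) → (Fin n → Fin M),
      ∀ x ∈ A, ∀ y ∈ A, c x = c y → dist x y ≤ r ^ n := by
    intro n
    induction n with
    | zero =>
      refine ⟨fun _ => ![], fun x hx y hy _ => ?_⟩
      simpa [hdiam] using Metric.dist_le_diam_of_mem hA.isBounded hx hy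
    | succ n ih =>
      obtain ⟨c, hc⟩ := ih
      have hchoice : ∀ x : EuclideanSpace ℝ (Fin p),
          ∃ q : Fin M × EuclideanSpace ℝ (Fin p), x ∈ A → q.2 ∈ A ∧ ψ q.1 q.2 = x := by
        intro x
        by_cases hx : x ∈ A
        · rw [hfix] at hx
          simp only [Set.mem_iUnion, Set.mem_image] at hx
          obtain ⟨m, w, hw, hww⟩ := hx
          exact ⟨(m, w), fun _ => ⟨hw, hww⟩⟩
        · exact ⟨(⟨0, hM0⟩, x), fun h => absurd h hx⟩
      choose q hq using hchoice
      refine ⟨fun x => Fin.cons (q x).1 (c (q x).2), ?_⟩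
      intro x hx y hy hxy
      obtain ⟨hwx, hψx⟩ := hq x hx
      obtain ⟨hwy, hψy⟩ := hq y hy
      have h1 : (q x).1 = (q y).1 := by simpa using congrFun hxy 0
      have h2 : c (q x).2 = c (q y).2 := by
        funext i; simpa using congrFun hxy i.succ
      calc dist x y = dist (ψ (q x).1 (q x).2) (ψ (q y).1 (q y).2) := by rw [hψx, hψy]
        _ = r * dist (q x).2 (q y).2 := by rw [h1, hψ]
        _ ≤ r * r ^ n :=
            mul_le_mul_of_nonneg_left (hc _ hwx _ hwy h2) hr.le
        _ = r ^ (n + 1) := by ring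
  -- energy lower bound for each admissible configuration
  have hEbound : ∀ ω : Finset (EuclideanSpace ℝ (Fin p)), ↑ω ⊆ A →
      ω.card = M ^ (k + 1) + M ^ k →
      (M : ℝ) ^ k * (M : ℝ) ^ ((((k + 1 : ℕ)) : ℝ) * (s / d)) ≤ rieszEnergy s ω := by
    intro ω hsub hcard
    obtain ⟨c, hc⟩ := hcell (k + 1)
    set E0 : ℝ := (M : ℝ) ^ ((((k + 1 : ℕ)) : ℝ) * (s / d)) with hE0
    have hE0pos : 0 < E0 := Real.rpow_pos_of_pos hMpos _
    have hterm_nonneg : ∀ x y : EuclideanSpace ℝ (Fin p),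
        0 ≤ (if x ≠ y then dist x y ^ (-s) else 0) := by
      intro x y; split
      · positivity
      · exact le_refl 0
    -- step A : pointwise lower bound for the inner sum
    have stepA : ∀ x ∈ ω,
        (((ω.filter (fun y => c y = c x)).card : ℝ) - 1) * E0 ≤
          ∑ y ∈ ω, if x ≠ y then dist x y ^ (-s) else 0 := by
      intro x hx
      set T := (ω.filter (fun y => c y = c x)).erase x with hT
      have hTsub : T ⊆ ω := (Finset.erase_subset _ _).trans (Finset.filter_subset _ _)
      have hxmem : x ∈ ω.filter (fun y => c y = c x) := by simp [hx]
      have hTcard : (T.card : ℝ) = ((ω.filter (fun y => c y = c x)).card : ℝ) - 1 := by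
        rw [hT, Finset.card_erase_of_mem hxmem]
        have h1 : 1 ≤ (ω.filter (fun y => c y = c x)).card :=
          Finset.card_pos.mpr ⟨x, hxmem⟩
        push_cast [h1]
        ring
      have h1 : ∀ y ∈ T, E0 ≤ if x ≠ y then dist x y ^ (-s) else 0 := by
        intro y hy
        have hyx : y ≠ x := Finset.ne_of_mem_erase hy
        have hyf : c y = c x := by
          have h := Finset.mem_of_mem_erase hy
          simp only [Finset.mem_filter] at h
          exact h.2
        have hyω : y ∈ ω := hTsub hy
        have hdxy : dist x y ≤ r ^ (k + 1) := hc x (hsub hx) y (hsub hyω) hyf.symm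
        have hdpos : 0 < dist x y := dist_pos.mpr hyx.symm
        rw [if_pos hyx.symm]
        calc E0 = (r ^ (k + 1)) ^ (-s) := (hkey (k + 1)).symm
          _ ≤ dist x y ^ (-s) :=
              Real.rpow_le_rpow_of_nonpos hdpos hdxy (by linarith)
      calc (((ω.filter (fun y => c y = c x)).card : ℝ) - 1) * E0
          = ∑ _y ∈ T, E0 := by rw [Finset.sum_const, nsmul_eq_mul, hTcard]
        _ ≤ ∑ y ∈ T, if x ≠ y then dist x y ^ (-s) else 0 := Finset.sum_le_sum h1
        _ ≤ ∑ y ∈ ω, if x ≠ y then dist x y ^ (-s) else 0 :=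
            Finset.sum_le_sum_of_subset_of_nonneg hTsub fun y _ _ => hterm_nonneg x y
    -- step B : pigeonhole counting
    have stepB : ((M : ℝ)) ^ k ≤
        ∑ x ∈ ω, (((ω.filter (fun y => c y = c x)).card : ℝ) - 1) := by
      have hkappa : (Fintype.card (Fin (k + 1) → Fin M) : ℝ) = (M : ℝ) ^ (k + 1) := by
        simp [Fintype.card_fun]
      have hfib := Finset.sum_fiberwise ω c
        (fun x => (((ω.filter (fun y => c y = c x)).card : ℝ) - 1))
      rw [← hfib]
      have hinner : ∀ j : Fin (k + 1) → Fin M,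
          ∑ x ∈ ω.filter (fun i => c i = j), (((ω.filter (fun y => c y = c x)).card : ℝ) - 1)
            = ((ω.filter (fun i => c i = j)).card : ℝ) *
                (((ω.filter (fun i => c i = j)).card : ℝ) - 1) := by
        intro j
        rw [Finset.sum_congr rfl (fun x hx => ?_), Finset.sum_const, nsmul_eq_mul]
        have hcx : c x = j := (Finset.mem_filter.mp hx).2
        rw [hcx]
      have hsum : ∑ j : Fin (k + 1) → Fin M, ((ω.filter (fun i => c i = j)).card : ℝ)
          = (M : ℝ) ^ (k + 1) + (M : ℝ) ^ k := by
        have h := Finset.card_eq_sum_card_fiberwise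
          (f := c) (s := ω) (t := Finset.univ) (fun x _ => Finset.mem_univ _)
        have h2 : ((ω.card : ℕ) : ℝ) = ∑ j : Fin (k + 1) → Fin M,
            ((ω.filter (fun i => c i = j)).card : ℝ) := by
          rw [h]; push_cast; rfl
        rw [← h2, hcard]; push_cast; ring
      calc ((M : ℝ)) ^ k
          = ((M : ℝ) ^ (k + 1) + (M : ℝ) ^ k) - (M : ℝ) ^ (k + 1) := by ring
        _ = ∑ j : Fin (k + 1) → Fin M,
              (((ω.filter (fun i => c i = j)).card : ℝ) - 1) := by
            rw [Finset.sum_sub_distrib, hsum, Finset.sum_const, nsmul_eq_mul, mul_one,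
              Finset.card_univ, hkappa]
        _ ≤ ∑ j : Fin (k + 1) → Fin M,
              ((ω.filter (fun i => c i = j)).card : ℝ) *
                (((ω.filter (fun i => c i = j)).card : ℝ) - 1) := by
            apply Finset.sum_le_sum
            intro j _
            nlinarith [sq_nonneg (((ω.filter (fun i => c i = j)).card : ℝ) - 1)]
        _ = ∑ j : Fin (k + 1) → Fin M, ∑ x ∈ ω.filter (fun i => c i = j),
              (((ω.filter (fun y => c y = c x)).card : ℝ) - 1) := by
            exact (Finset.sum_congr rfl fun j _ => (hinner j).symm)
    calc (M : ℝ) ^ k * E0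
        ≤ (∑ x ∈ ω, (((ω.filter (fun y => c y = c x)).card : ℝ) - 1)) * E0 :=
          mul_le_mul_of_nonneg_right stepB hE0pos.le
      _ = ∑ x ∈ ω, (((ω.filter (fun y => c y = c x)).card : ℝ) - 1) * E0 := by
          rw [Finset.sum_mul]
      _ ≤ ∑ x ∈ ω, ∑ y ∈ ω, if x ≠ y then dist x y ^ (-s) else 0 :=
          Finset.sum_le_sum stepA
      _ = rieszEnergy s ω := by rw [rieszEnergy]; congr!
  -- A is infinite
  have hinf : A.Infinite := by
    intro hfin
    have m0 : Fin M := ⟨0, hM0⟩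
    have hsub0 : ψ m0 '' A ⊆ A := by
      conv_rhs => rw [hfix]
      exact Set.subset_iUnion (fun m => ψ m '' A) m0
    have hinj : Function.Injective (ψ m0) := by
      intro a b hab
      have h := hψ m0 a b
      rw [hab, dist_self] at h
      have h0 : dist a b = 0 := by
        rcases mul_eq_zero.mp h.symm with h' | h'
        · exact absurd h' (ne_of_gt hr)
        · exact h'
      exact dist_eq_zero.mp h0
    have heq : ψ m0 '' A = A :=
      Set.eq_of_subset_of_ncard_le hsub0
        (by rw [Set.ncard_image_of_injective A hinj]) hfin
    have hle : Metric.diam A ≤ r := by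
      apply Metric.diam_le_of_forall_dist_le hr.le
      intro a ha b hb
      rw [← heq] at ha hb
      obtain ⟨a', ha', rfl⟩ := ha
      obtain ⟨b', hb', rfl⟩ := hb
      rw [hψ]
      calc r * dist a' b'
          ≤ r * Metric.diam A :=
            mul_le_mul_of_nonneg_left
              (Metric.dist_le_diam_of_mem hA.isBounded ha' hb') hr.le
        _ = r := by rw [hdiam, mul_one]
    rw [hdiam] at hle
    linarith
  obtain ⟨ω₀, hω₀sub, hω₀card⟩ := hinf.exists_subset_card_eq (M ^ (k + 1) + M ^ k)
  rw [minRieszEnergy]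
  refine le_csInf ⟨rieszEnergy s ω₀, ω₀, hω₀sub, hω₀card, rfl⟩ ?_
  rintro e ⟨ω, hsub, hcard, rfl⟩
  have halg : (M : ℝ) ^ (s / d) * ((M : ℝ) ^ k) ^ (1 + s / d)
      = (M : ℝ) ^ k * (M : ℝ) ^ ((((k + 1 : ℕ)) : ℝ) * (s / d)) := by
    rw [← Real.rpow_natCast ((M : ℝ)) k, ← Real.rpow_mul hMpos.le,
      ← Real.rpow_add hMpos, ← Real.rpow_add hMpos]
    congr 1
    push_cast
    ring
  rw [halg]
  exact hEbound ω hsub hcard
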